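/- arXiv:2010.02502 — 3 statements merged into one kernel-verified Lean document; each statement's English description precedes it below -/
import Mathlib

section
/- If x_{t-1} | x_t, x_0 is Gaussian with mean √(α_{t-1}) x_0 + √(1 - α_{t-1} - σ_t²) · (x_t - √(α_t) x_0)/√(1 - α_t) and covariance σ_t² I, and x_t | x_0 is Gaussian with mean √(α_t) x_0 and covariance (1 - α_t) I, then the marginal of x_{t-1} given x_0 is Gaussian with mean √(α_{t-1}) x_0 and covariance (1 - α_{t-1}) I. -/
open MeasureTheory Real Set

lemma rpow_neg_half_eq (a : ℝ) (ha : 0 ≤ a) : a ^ (-(1:ℝ)/2) = (Real.sqrt a)⁻¹ := by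
  rw [Real.sqrt_eq_rpow, ← Real.rpow_neg ha]
  norm_num

lemma oneD (z c s1 s2 : ℝ) (h1 : 0 < s1) (h2 : 0 < s2) :
    (∫ u : ℝ, (2*π*s1) ^ (-(1:ℝ)/2) * Real.exp (-(z - c*u)^2/(2*s1)) *
      ((2*π*s2) ^ (-(1:ℝ)/2) * Real.exp (-u^2/(2*s2))))
    = (2*π*(s1+c^2*s2)) ^ (-(1:ℝ)/2) * Real.exp (-z^2/(2*(s1+c^2*s2))) := by
  have hS : 0 < s1 + c^2*s2 := by positivity
  have hτ : 0 < s1*s2/(s1+c^2*s2) := by positivity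
  have key : ∀ u : ℝ, (2*π*s1) ^ (-(1:ℝ)/2) * Real.exp (-(z - c*u)^2/(2*s1)) *
      ((2*π*s2) ^ (-(1:ℝ)/2) * Real.exp (-u^2/(2*s2)))
      = ((2*π*s1) ^ (-(1:ℝ)/2) * (2*π*s2) ^ (-(1:ℝ)/2) * Real.exp (-z^2/(2*(s1+c^2*s2)))) *
        Real.exp (-(1/(2*(s1*s2/(s1+c^2*s2)))) * (u - c*s2*z/(s1+c^2*s2))^2) := by
    intro u
    have hexp : -(z - c*u)^2/(2*s1) + -u^2/(2*s2)
        = -z^2/(2*(s1+c^2*s2)) +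
          -(1/(2*(s1*s2/(s1+c^2*s2)))) * (u - c*s2*z/(s1+c^2*s2))^2 := by
      field_simp
      ring
    rw [mul_mul_mul_comm, ← Real.exp_add, hexp, Real.exp_add, ← mul_assoc]
  simp_rw [key]
  rw [MeasureTheory.integral_const_mul]
  have hshift : (∫ u : ℝ, Real.exp (-(1/(2*(s1*s2/(s1+c^2*s2)))) *
      (u - c*s2*z/(s1+c^2*s2))^2))
      = Real.sqrt (π / (1/(2*(s1*s2/(s1+c^2*s2))))) := by
    rw [integral_sub_right_eq_self (μ := volume)
      (fun u => Real.exp (-(1/(2*(s1*s2/(s1+c^2*s2)))) * u^2)) (c*s2*z/(s1+c^2*s2))]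
    exact integral_gaussian _
  rw [hshift]
  have hpd : π / (1/(2*(s1*s2/(s1+c^2*s2)))) = 2*π*(s1*s2/(s1+c^2*s2)) := by
    field_simp
  rw [hpd, rpow_neg_half_eq _ (by positivity), rpow_neg_half_eq _ (by positivity),
    rpow_neg_half_eq _ (by positivity)]
  have hsq : Real.sqrt (2*π*(s1*s2/(s1+c^2*s2))) * Real.sqrt (2*π*(s1+c^2*s2))
      = Real.sqrt (2*π*s1) * Real.sqrt (2*π*s2) := by
    rw [← Real.sqrt_mul (by positivity), ← Real.sqrt_mul (by positivity)]
    congr 1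
    field_simp
  have p1 : (0:ℝ) < Real.sqrt (2*π*s1) := Real.sqrt_pos.2 (by positivity)
  have p2 : (0:ℝ) < Real.sqrt (2*π*s2) := Real.sqrt_pos.2 (by positivity)
  have pS : (0:ℝ) < Real.sqrt (2*π*(s1+c^2*s2)) := Real.sqrt_pos.2 (by positivity)
  have e1 : 2*π*(s1*s2/(s1+c^2*s2)) = 2*π*s1*s2/(s1+s2*c^2) := by ring
  have e2 : 2*π*(s1+c^2*s2) = 2*π*(s1+s2*c^2) := by ring
  rw [e1, e2] at hsq
  field_simp
  nlinarith [hsq, Real.exp_pos (-z^2/(2*(s1+c^2*s2)))]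

lemma oneD' (z b β c s1 s2 : ℝ) (h1 : 0 < s1) (h2 : 0 < s2) :
    (∫ x : ℝ, (2*π*s1) ^ (-(1:ℝ)/2) * Real.exp (-(z - (b + c*(x - β)))^2/(2*s1)) *
      ((2*π*s2) ^ (-(1:ℝ)/2) * Real.exp (-(x - β)^2/(2*s2))))
    = (2*π*(s1+c^2*s2)) ^ (-(1:ℝ)/2) * Real.exp (-(z-b)^2/(2*(s1+c^2*s2))) := by
  rw [integral_sub_right_eq_self (μ := volume)
    (fun u => (2*π*s1) ^ (-(1:ℝ)/2) * Real.exp (-(z - (b + c*u))^2/(2*s1)) *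
      ((2*π*s2) ^ (-(1:ℝ)/2) * Real.exp (-u^2/(2*s2)))) β]
  have h := oneD (z - b) c s1 s2 h1 h2
  rw [← h]
  congr 1 with u
  congr 3
  ring

/-- Isotropic Gaussian probability density on `ℝ^d` with mean `μ` and covariance `s2 • I`. -/
noncomputable def gpdf {d : ℕ} (μ : EuclideanSpace ℝ (Fin d)) (s2 : ℝ)
    (x : EuclideanSpace ℝ (Fin d)) : ℝ :=
  (2 * Real.pi * s2) ^ (-(d : ℝ) / 2) * Real.exp (-‖x - μ‖ ^ 2 / (2 * s2))

lemma gpdf_eq_prod {d : ℕ} (μ : EuclideanSpace ℝ (Fin d)) {s : ℝ} (hs : 0 < s)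
    (x : EuclideanSpace ℝ (Fin d)) :
    gpdf μ s x = ∏ i, ((2*π*s) ^ (-(1:ℝ)/2) * Real.exp (-(x i - μ i)^2/(2*s))) := by
  have h2 : (0:ℝ) < 2*π*s := by positivity
  rw [Finset.prod_mul_distrib, Finset.prod_const, Finset.card_univ, Fintype.card_fin]
  unfold gpdf
  congr 1
  · rw [← Real.rpow_natCast ((2*π*s) ^ (-(1:ℝ)/2)) d, ← Real.rpow_mul h2.le]
    norm_num
    ring_nf
  · rw [← Real.exp_sum]
    congr 1
    have hn : ‖x - μ‖^2 = ∑ i, (x i - μ i)^2 := by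
      rw [EuclideanSpace.norm_eq, Real.sq_sqrt (by positivity)]
      congr 1 with i
      simp [sq_abs]
    rw [hn, neg_div, Finset.sum_div, ← Finset.sum_neg_distrib]
    congr 1 with i
    ring

/-- Gaussian marginalization for the DDIM reverse conditional: if
`x_{t-1} | x_t, x_0 ~ N(√α_{t-1} x_0 + √(1-α_{t-1}-σ²)·(x_t-√α_t x_0)/√(1-α_t), σ² I)` and
`x_t | x_0 ~ N(√α_t x_0, (1-α_t) I)`, then `x_{t-1} | x_0 ~ N(√α_{t-1} x_0, (1-α_{t-1}) I)`. -/
theorem ddim_reverse_marginal {d : ℕ} (x0 : EuclideanSpace ℝ (Fin d))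
    (αt αtm1 σt : ℝ) (hαt : αt ∈ Set.Ioo (0:ℝ) 1) (hαtm1 : αtm1 ∈ Set.Ioc (0:ℝ) 1)
    (hσ : 0 < σt) (hσle : σt ^ 2 ≤ 1 - αtm1) :
    ∀ y : EuclideanSpace ℝ (Fin d),
      (∫ x : EuclideanSpace ℝ (Fin d),
        gpdf (Real.sqrt αtm1 • x0 + Real.sqrt (1 - αtm1 - σt ^ 2) •
          ((Real.sqrt (1 - αt))⁻¹ • (x - Real.sqrt αt • x0))) (σt ^ 2) y
          * gpdf (Real.sqrt αt • x0) (1 - αt) x)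
        = gpdf (Real.sqrt αtm1 • x0) (1 - αtm1) y := by
  obtain ⟨hαt0, hαt1⟩ := hαt
  obtain ⟨hαtm10, hαtm11⟩ := hαtm1
  intro y
  have hs2 : (0:ℝ) < 1 - αt := by linarith
  have hs1 : (0:ℝ) < σt^2 := by positivity
  have hS : (0:ℝ) < 1 - αtm1 := lt_of_lt_of_le hs1 hσle
  have hc2 : (0:ℝ) ≤ 1 - αtm1 - σt^2 := by linarith
  set c := Real.sqrt (1 - αtm1 - σt^2) / Real.sqrt (1 - αt) with hc
  have hcsq : σt^2 + c^2 * (1 - αt) = 1 - αtm1 := by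
    have hcc : c^2 = (1-αtm1-σt^2)/(1-αt) := by
      rw [hc, div_pow, Real.sq_sqrt hc2, Real.sq_sqrt hs2.le]
    rw [hcc, div_mul_cancel₀ _ hs2.ne']
    ring
  have hmp := (EuclideanSpace.volume_preserving_symm_measurableEquiv_toLp (Fin d)).symm
  rw [← hmp.integral_comp (MeasurableEquiv.measurableEmbedding _)]
  have hpt : ∀ v : Fin d → ℝ,
      gpdf (Real.sqrt αtm1 • x0 + Real.sqrt (1 - αtm1 - σt ^ 2) •
          ((Real.sqrt (1 - αt))⁻¹ •
            ((MeasurableEquiv.toLp 2 (Fin d → ℝ)).symm.symm v - Real.sqrt αt • x0))) (σt ^ 2) y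
        * gpdf (Real.sqrt αt • x0) (1 - αt) ((MeasurableEquiv.toLp 2 (Fin d → ℝ)).symm.symm v)
      = ∏ i, ((2*π*σt^2) ^ (-(1:ℝ)/2) *
          Real.exp (-(y i - (Real.sqrt αtm1 * x0 i + c*(v i - Real.sqrt αt * x0 i)))^2/(2*σt^2)) *
          ((2*π*(1-αt)) ^ (-(1:ℝ)/2) *
            Real.exp (-(v i - Real.sqrt αt * x0 i)^2/(2*(1-αt))))) := by
    intro v
    rw [gpdf_eq_prod _ hs1, gpdf_eq_prod _ hs2, ← Finset.prod_mul_distrib]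
    congr 1 with i
    have hcoord : ((MeasurableEquiv.toLp 2 (Fin d → ℝ)).symm.symm v) i = v i := rfl
    simp only [PiLp.add_apply, PiLp.smul_apply, PiLp.sub_apply, smul_eq_mul, hcoord]
    have harg : Real.sqrt (1-αtm1-σt^2) * ((Real.sqrt (1-αt))⁻¹ * (v i - Real.sqrt αt * x0 i))
        = c * (v i - Real.sqrt αt * x0 i) := by
      rw [hc]; ring
    rw [harg]
  simp_rw [hpt]
  rw [MeasureTheory.integral_fintype_prod_volume_eq_prod (ι := Fin d)
    (f := fun i t => (2*π*σt^2) ^ (-(1:ℝ)/2) *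
      Real.exp (-(y i - (Real.sqrt αtm1 * x0 i + c*(t - Real.sqrt αt * x0 i)))^2/(2*σt^2)) *
      ((2*π*(1-αt)) ^ (-(1:ℝ)/2) * Real.exp (-(t - Real.sqrt αt * x0 i)^2/(2*(1-αt)))))]
  have h1d : ∀ i : Fin d, (∫ t : ℝ, (2*π*σt^2) ^ (-(1:ℝ)/2) *
      Real.exp (-(y i - (Real.sqrt αtm1 * x0 i + c*(t - Real.sqrt αt * x0 i)))^2/(2*σt^2)) *
      ((2*π*(1-αt)) ^ (-(1:ℝ)/2) * Real.exp (-(t - Real.sqrt αt * x0 i)^2/(2*(1-αt)))))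
      = (2*π*(1-αtm1)) ^ (-(1:ℝ)/2) *
        Real.exp (-(y i - Real.sqrt αtm1 * x0 i)^2/(2*(1-αtm1))) := by
    intro i
    have := oneD' (y i) (Real.sqrt αtm1 * x0 i) (Real.sqrt αt * x0 i) c (σt^2) (1-αt) hs1 hs2
    rw [this, hcsq]
  rw [Finset.prod_congr rfl (fun i _ => h1d i)]
  rw [gpdf_eq_prod _ hS y]
  exact Finset.prod_congr rfl fun i _ => by
    simp only [PiLp.smul_apply, smul_eq_mul]
end

section
/- For the one-dimensional case: if X_t = √(α_t) x_0 + √(1-α_t) ε with ε ~ N(0,1), and X_{t-1} = √(α_{t-1}) x_0 + √(1 - α_{t-1} - σ²) · (X_t - √(α_t) x_0)/√(1-α_t) + σ ε' with ε' ~ N(0,1) independent of ε, then X_{t-1} has distribution N(√(α_{t-1}) x_0, 1 - α_{t-1}). -/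
open MeasureTheory ProbabilityTheory Real
open scoped ENNReal NNReal

lemma conv_pdf (a b : ℝ) (ha : a ≠ 0) (hb : b ≠ 0) (y : ℝ) :
    ∫ x, gaussianPDFReal (a * x) ⟨b ^ 2, sq_nonneg b⟩ y * gaussianPDFReal 0 1 x
      = gaussianPDFReal 0 ⟨a ^ 2 + b ^ 2, add_nonneg (sq_nonneg a) (sq_nonneg b)⟩ y := by
  have hs2 : (0:ℝ) < a ^ 2 + b ^ 2 := by positivity
  have hb2 : (0:ℝ) < b ^ 2 := by positivity
  have hπ : (0:ℝ) < π := pi_pos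
  set s2 : ℝ := a ^ 2 + b ^ 2 with hs2def
  set k : ℝ := s2 / (2 * b ^ 2) with hkdef
  have hk : 0 < k := by positivity
  set c : ℝ := a * y / s2 with hcdef
  set C : ℝ := (√(2 * π * b ^ 2))⁻¹ * (√(2 * π))⁻¹ * rexp (-y ^ 2 / (2 * s2)) with hCdef
  have hfun : ∀ x, gaussianPDFReal (a * x) ⟨b ^ 2, sq_nonneg b⟩ y * gaussianPDFReal 0 1 x
      = C * rexp (-k * (x - c) ^ 2) := by
    intro x
    simp only [gaussianPDFReal, NNReal.coe_mk, NNReal.coe_one, mul_one, sub_zero, hCdef]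
    have hexp : rexp (-(y - a * x) ^ 2 / (2 * b ^ 2)) * rexp (-x ^ 2 / 2)
        = rexp (-y ^ 2 / (2 * s2)) * rexp (-k * (x - c) ^ 2) := by
      rw [← Real.exp_add, ← Real.exp_add]
      congr 1
      rw [hkdef, hcdef, hs2def]
      field_simp
      ring
    calc (√(2 * π * b ^ 2))⁻¹ * rexp (-(y - a * x) ^ 2 / (2 * b ^ 2)) *
          ((√(2 * π))⁻¹ * rexp (-x ^ 2 / 2))
        = (√(2 * π * b ^ 2))⁻¹ * (√(2 * π))⁻¹ *
          (rexp (-(y - a * x) ^ 2 / (2 * b ^ 2)) * rexp (-x ^ 2 / 2)) := by ring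
      _ = (√(2 * π * b ^ 2))⁻¹ * (√(2 * π))⁻¹ * rexp (-y ^ 2 / (2 * s2)) *
            rexp (-k * (x - c) ^ 2) := by rw [hexp]; ring
  have hconst : (√(2 * π * b ^ 2))⁻¹ * (√(2 * π))⁻¹ * √(π / k) = (√(2 * π * s2))⁻¹ := by
    rw [← Real.sqrt_inv, ← Real.sqrt_inv, ← Real.sqrt_mul (by positivity),
      ← Real.sqrt_mul (by positivity), ← Real.sqrt_inv]
    congr 1
    rw [hkdef]
    field_simp
  calc ∫ x, gaussianPDFReal (a * x) ⟨b ^ 2, sq_nonneg b⟩ y * gaussianPDFReal 0 1 x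
      = ∫ x, C * rexp (-k * (x - c) ^ 2) := by simp_rw [hfun]
    _ = C * ∫ x, rexp (-k * (x - c) ^ 2) := by rw [integral_const_mul]
    _ = C * ∫ x, rexp (-k * x ^ 2) := by
        rw [integral_sub_right_eq_self (fun x => rexp (-k * x ^ 2)) c]
    _ = C * √(π / k) := by rw [integral_gaussian]
    _ = gaussianPDFReal 0 ⟨s2, hs2.le⟩ y := by
        simp only [gaussianPDFReal, NNReal.coe_mk, hCdef, sub_zero]
        show (√(2 * π * b ^ 2))⁻¹ * (√(2 * π))⁻¹ * rexp (-y ^ 2 / (2 * s2)) * √(π / k) = (√(2 * π * s2))⁻¹ * rexp (-y ^ 2 / (2 * s2))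
        rw [← hconst]; ring


lemma gaussianPDFReal_le (m : ℝ) (v : ℝ≥0) (x : ℝ) :
    gaussianPDFReal m v x ≤ (√(2 * π * v))⁻¹ := by
  rw [gaussianPDFReal]
  have h1 : rexp (-(x - m) ^ 2 / (2 * v)) ≤ 1 := by
    rw [Real.exp_le_one_iff]
    apply div_nonpos_of_nonpos_of_nonneg (neg_nonpos.mpr (sq_nonneg _)) (by positivity)
  calc (√(2 * π * v))⁻¹ * rexp (-(x - m) ^ 2 / (2 * v))
      ≤ (√(2 * π * v))⁻¹ * 1 := mul_le_mul_of_nonneg_left h1 (by positivity)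
    _ = (√(2 * π * v))⁻¹ := mul_one _

lemma conv_integrable (a b : ℝ) (y : ℝ) :
    Integrable (fun x => gaussianPDFReal (a * x) ⟨b ^ 2, sq_nonneg b⟩ y
      * gaussianPDFReal 0 1 x) := by
  refine Integrable.bdd_mul (integrable_gaussianPDFReal 0 1) ?_
    (c := (√(2 * π * (⟨b ^ 2, sq_nonneg b⟩ : ℝ≥0)))⁻¹) (ae_of_all _ fun x => ?_)
  · have hm : Measurable (fun x => gaussianPDFReal (a * x) ⟨b ^ 2, sq_nonneg b⟩ y) := by
      unfold gaussianPDFReal; fun_prop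
    exact hm.aestronglyMeasurable
  · rw [Real.norm_eq_abs]; refine (abs_of_nonneg (gaussianPDFReal_nonneg _ _ _)).le.trans ?_
    exact gaussianPDFReal_le _ _ _

lemma gauss_sum {Ω : Type*} [MeasurableSpace Ω] (μ : Measure Ω)
    [IsProbabilityMeasure μ] (ε ε' : Ω → ℝ) (hmε : Measurable ε) (hmε' : Measurable ε')
    (hind : IndepFun ε ε' μ)
    (hε : Measure.map ε μ = gaussianReal 0 1) (hε' : Measure.map ε' μ = gaussianReal 0 1)
    (a b : ℝ) :
    Measure.map (fun ω => a * ε ω + b * ε' ω) μ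
      = gaussianReal 0 ⟨a ^ 2 + b ^ 2, add_nonneg (sq_nonneg a) (sq_nonneg b)⟩ := by
  by_cases ha : a = 0
  · subst ha
    have h1 : (fun ω => (0:ℝ) * ε ω + b * ε' ω) = (fun x => b * x) ∘ ε' := by
      funext ω; simp
    rw [h1, ← Measure.map_map (measurable_id'.const_mul b) hmε', hε',
      gaussianReal_map_const_mul]
    congr 1
    · simp
    · ext; simp; rfl
  by_cases hb : b = 0
  · subst hb
    have h1 : (fun ω => a * ε ω + (0:ℝ) * ε' ω) = (fun x => a * x) ∘ ε := by
      funext ω; simp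
    rw [h1, ← Measure.map_map (measurable_id'.const_mul a) hmε, hε,
      gaussianReal_map_const_mul]
    congr 1
    · simp
    · ext; simp; rfl
  -- main case
  have ha2 : 0 < a ^ 2 := lt_of_le_of_ne (sq_nonneg a) (Ne.symm (pow_ne_zero 2 ha))
  have hb2 : 0 < b ^ 2 := lt_of_le_of_ne (sq_nonneg b) (Ne.symm (pow_ne_zero 2 hb))
  have hv2 : (⟨a ^ 2 + b ^ 2, add_nonneg (sq_nonneg a) (sq_nonneg b)⟩ : ℝ≥0) ≠ 0 := by
    intro h
    have h2 := congrArg NNReal.toReal h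
    change a ^ 2 + b ^ 2 = 0 at h2
    nlinarith
  have hvb : (⟨b ^ 2, sq_nonneg b⟩ : ℝ≥0) ≠ 0 := by
    intro h
    have h2 := congrArg NNReal.toReal h
    change b ^ 2 = 0 at h2
    nlinarith
  have hjoint : μ.map (fun ω => (ε ω, ε' ω))
      = (gaussianReal 0 1).prod (gaussianReal 0 1) := by
    have h := (indepFun_iff_map_prod_eq_prod_map_map hmε.aemeasurable
      hmε'.aemeasurable).mp hind
    rw [hε, hε'] at h
    exact h
  have hmf : Measurable (fun p : ℝ × ℝ => a * p.1 + b * p.2) := by fun_prop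
  have hmap : Measure.map (fun ω => a * ε ω + b * ε' ω) μ
      = Measure.map (fun p : ℝ × ℝ => a * p.1 + b * p.2)
          ((gaussianReal 0 1).prod (gaussianReal 0 1)) := by
    rw [← hjoint, Measure.map_map hmf (hmε.prodMk hmε')]
    rfl
  rw [hmap]
  -- slice law
  have hslice : ∀ x : ℝ, (gaussianReal 0 1).map (fun y => a * x + b * y)
      = gaussianReal (a * x) ⟨b ^ 2, sq_nonneg b⟩ := by
    intro x
    have h1 : (fun y => a * x + b * y) = (fun z => z + a * x) ∘ (fun y => b * y) := by
      funext y; simp [add_comm]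
    rw [h1, ← Measure.map_map (measurable_id'.add_const _) (measurable_id'.const_mul b),
      gaussianReal_map_const_mul, gaussianReal_map_add_const]
    congr 1
    · simp
    · simp; rfl
  have hGm : Measurable (fun p : ℝ × ℝ =>
      gaussianPDF (a * p.1) (⟨b ^ 2, sq_nonneg b⟩ : ℝ≥0) p.2) := by
    unfold gaussianPDF gaussianPDFReal
    fun_prop
  ext s hs
  rw [Measure.map_apply hmf hs, gaussianReal_apply 0 hv2 s,
    Measure.prod_apply (hmf hs)]
  have hsection : ∀ x : ℝ, (gaussianReal 0 1) (Prod.mk x ⁻¹' ((fun p : ℝ × ℝ => a * p.1 + b * p.2) ⁻¹' s))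
      = ∫⁻ y in s, gaussianPDF (a * x) ⟨b ^ 2, sq_nonneg b⟩ y := by
    intro x
    have : Prod.mk x ⁻¹' ((fun p : ℝ × ℝ => a * p.1 + b * p.2) ⁻¹' s)
        = (fun y => a * x + b * y) ⁻¹' s := rfl
    rw [this, ← Measure.map_apply (by fun_prop) hs, hslice x,
      gaussianReal_apply _ hvb s]
  simp_rw [hsection]
  rw [gaussianReal_of_var_ne_zero 0 one_ne_zero,
    lintegral_withDensity_eq_lintegral_mul _ (measurable_gaussianPDF 0 1)
      (Measurable.lintegral_prod_right
        (f := fun x y => gaussianPDF (a * x) ⟨b ^ 2, sq_nonneg b⟩ y) hGm)]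
  simp only [Pi.mul_apply]
  have hmG : ∀ x : ℝ, Measurable (fun y => gaussianPDF (a * x) (⟨b ^ 2, sq_nonneg b⟩ : ℝ≥0) y) := by
    intro x; unfold gaussianPDF gaussianPDFReal; fun_prop
  have h1 : ∀ x : ℝ, gaussianPDF 0 1 x * ∫⁻ y in s, gaussianPDF (a * x) ⟨b ^ 2, sq_nonneg b⟩ y
      = ∫⁻ y in s, gaussianPDF 0 1 x * gaussianPDF (a * x) ⟨b ^ 2, sq_nonneg b⟩ y :=
    fun x => (lintegral_const_mul _ (hmG x)).symm
  simp_rw [h1]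
  rw [lintegral_lintegral_swap (by
    apply Measurable.aemeasurable
    unfold gaussianPDF gaussianPDFReal
    fun_prop)]
  have hinner : ∀ y : ℝ, (∫⁻ x, gaussianPDF 0 1 x * gaussianPDF (a * x) ⟨b ^ 2, sq_nonneg b⟩ y)
      = gaussianPDF 0 ⟨a ^ 2 + b ^ 2, add_nonneg (sq_nonneg a) (sq_nonneg b)⟩ y := by
    intro y
    have hcomm : ∀ x : ℝ, gaussianPDF 0 1 x * gaussianPDF (a * x) ⟨b ^ 2, sq_nonneg b⟩ y
        = ENNReal.ofReal (gaussianPDFReal (a * x) ⟨b ^ 2, sq_nonneg b⟩ y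
            * gaussianPDFReal 0 1 x) := by
      intro x
      unfold gaussianPDF; rw [
        ← ENNReal.ofReal_mul (gaussianPDFReal_nonneg _ _ _), mul_comm]
    simp_rw [hcomm]
    rw [← ofReal_integral_eq_lintegral_ofReal (conv_integrable a b y)
      (ae_of_all _ fun x => mul_nonneg (gaussianPDFReal_nonneg _ _ _)
        (gaussianPDFReal_nonneg _ _ _)),
      conv_pdf a b ha hb y]
    rfl
  simp_rw [hinner]

/-- One-dimensional DDIM marginal: with `X_t = √α_t x_0 + √(1-α_t) ε` and
`X_{t-1} = √α_{t-1} x_0 + √(1-α_{t-1}-σ²)·(X_t - √α_t x_0)/√(1-α_t) + σ ε'` for independent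
standard Gaussians `ε, ε'`, the law of `X_{t-1}` is `N(√α_{t-1} x_0, 1-α_{t-1})`. -/
theorem ddim_one_dim_marginal {Ω : Type*} [MeasurableSpace Ω] (μ : Measure Ω)
    [IsProbabilityMeasure μ] (ε ε' : Ω → ℝ) (hmε : Measurable ε) (hmε' : Measurable ε')
    (hind : IndepFun ε ε' μ)
    (hε : Measure.map ε μ = gaussianReal 0 1) (hε' : Measure.map ε' μ = gaussianReal 0 1)
    (x0 αt αtm1 σ : ℝ) (hαt : αt ∈ Set.Ioo (0:ℝ) 1) (hαtm1 : αtm1 ∈ Set.Ioc (0:ℝ) 1)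
    (hσ : 0 ≤ σ) (hσle : σ ^ 2 ≤ 1 - αtm1) :
    Measure.map (fun ω =>
        Real.sqrt αtm1 * x0 + Real.sqrt (1 - αtm1 - σ ^ 2) *
          (((Real.sqrt αt * x0 + Real.sqrt (1 - αt) * ε ω) - Real.sqrt αt * x0)
            / Real.sqrt (1 - αt)) + σ * ε' ω) μ
      = gaussianReal (Real.sqrt αtm1 * x0) ((1 - αtm1).toNNReal) := by
  have h1t : Real.sqrt (1 - αt) ≠ 0 := ne_of_gt (Real.sqrt_pos.mpr (by linarith [hαt.2]))
  have hnn : 0 ≤ 1 - αtm1 - σ ^ 2 := by linarith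
  have hnn2 : 0 ≤ 1 - αtm1 := by nlinarith [sq_nonneg σ]
  set A : ℝ := Real.sqrt (1 - αtm1 - σ ^ 2) with hAdef
  set m0 : ℝ := Real.sqrt αtm1 * x0 with hm0def
  have hfun : (fun ω =>
        Real.sqrt αtm1 * x0 + Real.sqrt (1 - αtm1 - σ ^ 2) *
          (((Real.sqrt αt * x0 + Real.sqrt (1 - αt) * ε ω) - Real.sqrt αt * x0)
            / Real.sqrt (1 - αt)) + σ * ε' ω)
      = (· + m0) ∘ (fun ω => A * ε ω + σ * ε' ω) := by
    funext ω
    simp only [Function.comp_apply, hAdef, hm0def]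
    field_simp
    ring
  rw [hfun, ← Measure.map_map (f := fun ω => A * ε ω + σ * ε' ω) (measurable_id'.add_const m0)
      ((hmε.const_mul A).add (hmε'.const_mul σ)),
    gauss_sum μ ε ε' hmε hmε' hind hε hε' A σ]
  refine (gaussianReal_map_add_const m0).trans ?_
  congr 1
  · exact zero_add m0
  · ext
    change A ^ 2 + σ ^ 2 = _
    rw [Real.coe_toNNReal _ hnn2, hAdef, Real.sq_sqrt hnn]
    ring
end

section
/- With the DDPM choice σ_t² = (1-α_{t-1})/(1-α_t) · (1 - α_t/α_{t-1}), the coefficient of x_t in the reverse conditional mean satisfies √(1 - α_{t-1} - σ_t²)/√(1 - α_t) = √(α_t/α_{t-1}) · (1 - α_{t-1})/(1 - α_t), and the coefficient of x_0 satisfies √(α_{t-1}) - √(1 - α_{t-1} - σ_t²)·√(α_t)/√(1-α_t) = √(α_{t-1})·(1 - α_t/α_{t-1})/(1 - α_t). -/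
/-- With the DDPM choice `σ_t² = (1-α_{t-1})/(1-α_t)·(1-α_t/α_{t-1})`, the coefficient of `x_t` in
the reverse conditional mean is `√(α_t/α_{t-1})·(1-α_{t-1})/(1-α_t)` and the coefficient of `x_0`
is `√(α_{t-1})·(1-α_t/α_{t-1})/(1-α_t)` (the DDPM posterior mean coefficients). -/
theorem ddim_mean_coefficients (αt αtm1 : ℝ) (h0 : 0 < αt) (h1 : αt < αtm1) (h2 : αtm1 ≤ 1) :
    Real.sqrt (1 - αtm1 - (1 - αtm1) / (1 - αt) * (1 - αt / αtm1)) / Real.sqrt (1 - αt)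
        = Real.sqrt (αt / αtm1) * (1 - αtm1) / (1 - αt) ∧
    Real.sqrt αtm1 -
        Real.sqrt (1 - αtm1 - (1 - αtm1) / (1 - αt) * (1 - αt / αtm1)) * Real.sqrt αt
          / Real.sqrt (1 - αt)
        = Real.sqrt αtm1 * (1 - αt / αtm1) / (1 - αt) := by
  have hm : 0 < αtm1 := h0.trans h1
  have hA : 0 < 1 - αt := by linarith
  have hsq : Real.sqrt (αt / αtm1) ^ 2 = αt / αtm1 := Real.sq_sqrt (by positivity)
  have key : 1 - αtm1 - (1 - αtm1) / (1 - αt) * (1 - αt / αtm1)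
      = ((1 - αtm1) * Real.sqrt (αt / αtm1)) ^ 2 / (1 - αt) := by
    rw [mul_pow, hsq]
    field_simp
    ring
  have hAs : Real.sqrt (1 - αt) * Real.sqrt (1 - αt) = 1 - αt :=
    Real.mul_self_sqrt hA.le
  have hAs0 : Real.sqrt (1 - αt) ≠ 0 := by positivity
  have hsqrt : Real.sqrt (1 - αtm1 - (1 - αtm1) / (1 - αt) * (1 - αt / αtm1))
      = (1 - αtm1) * Real.sqrt (αt / αtm1) / Real.sqrt (1 - αt) := by
    rw [key, Real.sqrt_div (by positivity), Real.sqrt_sq (mul_nonneg (by linarith) (Real.sqrt_nonneg _))]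
  constructor
  · rw [hsqrt]
    field_simp
    ring_nf
    rw [Real.sq_sqrt hA.le]
    ring
  · rw [hsqrt]
    have hms0 : Real.sqrt αtm1 ≠ 0 := by positivity
    field_simp
    have hat : Real.sqrt αt * Real.sqrt αt = αt := Real.mul_self_sqrt h0.le
    ring_nf
    rw [Real.sq_sqrt hA.le]
    have hs : Real.sqrt (αt * αtm1⁻¹) * Real.sqrt αtm1 = Real.sqrt αt := by
      rw [← Real.sqrt_mul (by positivity)]; congr 1; field_simp
    have hm2 : Real.sqrt αtm1 ^ 2 = αtm1 := Real.sq_sqrt hm.le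
    linear_combination (1 - αt) * (αtm1 - 1) * (-(Real.sqrt (αt * αtm1⁻¹) * Real.sqrt αt) * hm2 + Real.sqrt αt * Real.sqrt αtm1 * hs + Real.sqrt αtm1 * hat)
end
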